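/- Pathwise uniqueness and stability: let ν > 0, T > 0, and let u₁, u₂ ∈ C([0,T];H) be weak solutions of the dyadic model with the same forcing path ω : [0,T] → H and initial data u₁(0), u₂(0) ∈ H. Then there is a constant C > 0 depending only on ν such that |u₁(t) − u₂(t)|_H² ≤ exp( C ∫₀ᵗ ( |u₁(s)|_H² + |u₂(s)|_H² ) ds ) · |u₁(0) − u₂(0)|_H² for all t ∈ [0,T]. In particular, if u₁(0) = u₂(0) then u₁(t) = u₂(t) for all t ∈ [0,T]. -/

import Mathlib

/-- The dyadic wave numbers `k_n = k₀ · 2ⁿ`. -/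
noncomputable def kseq (k0 : ℝ) (n : ℕ) : ℝ := k0 * 2 ^ n

/-- The bilinear operator of the dyadic shell model,
`(B(u,v))_n = k_{n-1} u_{n-1} v_{n-1} − k_n u_n v_{n+1}` (natural subtraction;
sequences satisfy the convention `u 0 = 0`). -/
noncomputable def Bop (k0 : ℝ) (u v : ℕ → ℝ) (n : ℕ) : ℝ :=
  kseq k0 (n - 1) * u (n - 1) * v (n - 1) - kseq k0 n * u n * v (n + 1)

/-- The `H`-norm `|x|_H = (Σ_{n≥1} x_n²)^{1/2}`. -/
noncomputable def Hnorm (x : ℕ → ℝ) : ℝ := Real.sqrt (∑' n : ℕ, (x (n + 1)) ^ 2)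

/-- Membership in `H`: the convention `x 0 = 0` together with `Σ_{n≥1} x_n² < ∞`. -/
def memH (x : ℕ → ℝ) : Prop := x 0 = 0 ∧ Summable (fun n : ℕ => (x (n + 1)) ^ 2)

/-- The `H`-inner product `⟨x,y⟩_H = Σ_{n≥1} x_n y_n`. -/
noncomputable def Hinner (x y : ℕ → ℝ) : ℝ := ∑' n : ℕ, x (n + 1) * y (n + 1)

/-- Continuity of a path `[0,T] → H` with respect to the `H`-norm. -/
def ContPathH (T : ℝ) (u : ℝ → ℕ → ℝ) : Prop :=
  ∀ t ∈ Set.Icc (0 : ℝ) T, ∀ ε > (0 : ℝ), ∃ δ > (0 : ℝ), ∀ s ∈ Set.Icc (0 : ℝ) T,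
    |s - t| < δ → Hnorm (fun n => u s n - u t n) < ε

/-- `u ∈ C([0,T];H)` is a weak solution of the dyadic model with viscosity `ν`,
forcing path `ω` and initial datum `u0`: for every `φ ∈ D(A)` and `t ∈ [0,T]`,
`⟨u(t),φ⟩_H + ν ∫₀ᵗ Σ_{n≥1} u_n(s) k_n² φ_n ds
  = ⟨u0,φ⟩_H + ∫₀ᵗ ⟨B(u(s),φ),u(s)⟩_H ds + ⟨ω(t),φ⟩_H`. -/
def IsWeakSolution (k0 ν T : ℝ) (ω : ℝ → ℕ → ℝ) (u0 : ℕ → ℝ) (u : ℝ → ℕ → ℝ) : Prop :=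
  (∀ t ∈ Set.Icc (0 : ℝ) T, memH (u t)) ∧ ContPathH T u ∧
  ∀ φ : ℕ → ℝ, φ 0 = 0 →
    Summable (fun n : ℕ => (kseq k0 (n + 1)) ^ 4 * (φ (n + 1)) ^ 2) →
    ∀ t ∈ Set.Icc (0 : ℝ) T,
      Hinner (u t) φ
          + ν * ∫ s in (0 : ℝ)..t, ∑' n : ℕ, u s (n + 1) * (kseq k0 (n + 1)) ^ 2 * φ (n + 1)
        = Hinner u0 φ
          + (∫ s in (0 : ℝ)..t, ∑' n : ℕ, Bop k0 (u s) φ (n + 1) * u s (n + 1))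
          + Hinner (ω t) φ

/-- `ω ∈ C^α([0,T];H)`: an `H`-valued path which is `α`-Hölder continuous. -/
def IsHolderPath (T α : ℝ) (ω : ℝ → ℕ → ℝ) : Prop :=
  (∀ t ∈ Set.Icc (0 : ℝ) T, memH (ω t)) ∧
  ∃ Cω : ℝ, ∀ s ∈ Set.Icc (0 : ℝ) T, ∀ t ∈ Set.Icc (0 : ℝ) T,
    Hnorm (fun n => ω t n - ω s n) ≤ Cω * |t - s| ^ α

lemma summable_sq_add {x y : ℕ → ℝ} (hx : Summable (fun n => x n ^ 2))
    (hy : Summable (fun n => y n ^ 2)) : Summable (fun n => (x n + y n) ^ 2) := by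
  apply Summable.of_nonneg_of_le (fun n => sq_nonneg _) (fun n => ?_)
    (((hx.add hy).mul_left 2))
  have := sq_nonneg (x n - y n)
  nlinarith [sq_nonneg (x n + y n)]

lemma summable_abs_mul {x y : ℕ → ℝ} (hx : Summable (fun n => x n ^ 2))
    (hy : Summable (fun n => y n ^ 2)) : Summable (fun n => |x n * y n|) := by
  apply Summable.of_nonneg_of_le (fun n => abs_nonneg _) (fun n => ?_)
    ((hx.add hy).mul_left (1/2))
  rw [abs_mul]
  nlinarith [sq_nonneg (|x n| - |y n|), sq_abs (x n), sq_abs (y n), abs_nonneg (x n), abs_nonneg (y n)]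

lemma tsum_abs_mul_le {x y : ℕ → ℝ} (hx : Summable (fun n => x n ^ 2))
    (hy : Summable (fun n => y n ^ 2)) :
    ∑' n, |x n * y n| ≤ Real.sqrt (∑' n, x n ^ 2) * Real.sqrt (∑' n, y n ^ 2) := by
  apply Summable.tsum_le_of_sum_le (summable_abs_mul hx hy)
  intro F
  have h1 : (∑ n ∈ F, |x n * y n|) ^ 2 ≤ (∑ n ∈ F, x n ^ 2) * (∑ n ∈ F, y n ^ 2) := by
    have := Finset.sum_mul_sq_le_sq_mul_sq F (fun n => |x n|) (fun n => |y n|)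
    simpa [abs_mul, sq_abs] using this
  have h2 : (∑ n ∈ F, x n ^ 2) ≤ ∑' n, x n ^ 2 := Summable.sum_le_tsum F (fun n _ => sq_nonneg _) hx
  have h3 : (∑ n ∈ F, y n ^ 2) ≤ ∑' n, y n ^ 2 := Summable.sum_le_tsum F (fun n _ => sq_nonneg _) hy
  have hF : (0:ℝ) ≤ ∑ n ∈ F, |x n * y n| := Finset.sum_nonneg (fun n _ => abs_nonneg _)
  have : (∑ n ∈ F, |x n * y n|) ^ 2 ≤ (∑' n, x n ^ 2) * (∑' n, y n ^ 2) :=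
    h1.trans (mul_le_mul h2 h3 (Finset.sum_nonneg (fun n _ => sq_nonneg _))
      (tsum_nonneg (fun n => sq_nonneg _)))
  calc ∑ n ∈ F, |x n * y n| = Real.sqrt ((∑ n ∈ F, |x n * y n|)^2) := (Real.sqrt_sq hF).symm
    _ ≤ Real.sqrt ((∑' n, x n ^ 2) * (∑' n, y n ^ 2)) := Real.sqrt_le_sqrt this
    _ = _ := Real.sqrt_mul (tsum_nonneg (fun n => sq_nonneg _)) _

lemma hnorm_sq {x : ℕ → ℝ} (hx : Summable (fun n => x (n+1) ^ 2)) :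
    Hnorm x ^ 2 = ∑' n, x (n+1) ^ 2 := by
  rw [Hnorm, Real.sq_sqrt (tsum_nonneg (fun n => sq_nonneg _))]

lemma sq_le_hnorm {x : ℕ → ℝ} (hx : Summable (fun n => x (n+1) ^ 2)) (m : ℕ) :
    x (m+1) ^ 2 ≤ Hnorm x ^ 2 := by
  rw [hnorm_sq hx]; exact Summable.le_tsum hx m (fun n _ => sq_nonneg _)

lemma hnorm_nonneg (x : ℕ → ℝ) : 0 ≤ Hnorm x := Real.sqrt_nonneg _

lemma hnorm_add_le {x y : ℕ → ℝ} (hx : Summable (fun n => x (n+1) ^ 2))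
    (hy : Summable (fun n => y (n+1) ^ 2)) :
    Hnorm (fun n => x n + y n) ≤ Hnorm x + Hnorm y := by
  have hs := summable_sq_add hx hy
  have habs := tsum_abs_mul_le hx hy
  have hsum : ∑' n, (x (n+1) + y (n+1)) ^ 2 ≤ (Hnorm x + Hnorm y) ^ 2 := by
    have e : ∀ n : ℕ, (x (n+1) + y (n+1)) ^ 2 = x (n+1)^2 + y (n+1)^2 + 2*(x (n+1)*y (n+1)) := by
      intro n; ring
    rw [tsum_congr e, Summable.tsum_add (hx.add hy) (((summable_abs_mul hx hy).of_abs).mul_left 2),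
      Summable.tsum_add hx hy]
    have h2 : ∑' n, 2*(x (n+1) * y (n+1)) = 2 * ∑' n, x (n+1)*y (n+1) := tsum_mul_left
    have h3 : ∑' n, x (n+1)*y (n+1) ≤ ∑' n, |x (n+1)*y (n+1)| :=
      Summable.tsum_le_tsum (fun n => le_abs_self _) (summable_abs_mul hx hy).of_abs (summable_abs_mul hx hy)
    have hxx : Hnorm x ^2 = ∑' n, x (n+1)^2 := hnorm_sq hx
    have hyy : Hnorm y ^2 = ∑' n, y (n+1)^2 := hnorm_sq hy
    have hH : ∑' n, |x (n+1)*y (n+1)| ≤ Hnorm x * Hnorm y := habs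
    have expand : (Hnorm x + Hnorm y)^2 = Hnorm x^2 + 2*(Hnorm x*Hnorm y) + Hnorm y^2 := by ring
    rw [expand, hxx, hyy, h2]
    linarith
  calc Hnorm (fun n => x n + y n) = Real.sqrt (∑' n, (x (n+1) + y (n+1))^2) := rfl
    _ ≤ Real.sqrt ((Hnorm x + Hnorm y)^2) := Real.sqrt_le_sqrt hsum
    _ = Hnorm x + Hnorm y := Real.sqrt_sq (add_nonneg (hnorm_nonneg x) (hnorm_nonneg y))

lemma summable_sq_sub {x y : ℕ → ℝ} (hx : Summable (fun n => x (n+1) ^ 2))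
    (hy : Summable (fun n => y (n+1) ^ 2)) :
    Summable (fun n => (x (n+1) - y (n+1)) ^ 2) := by
  have h := summable_sq_add (x := fun n => x (n+1)) (y := fun n => -(y (n+1))) hx
    (by simpa using hy)
  simpa [sub_eq_add_neg] using h

lemma abs_le_hnorm {x : ℕ → ℝ} (hx : Summable (fun n => x (n+1) ^ 2)) (m : ℕ) :
    |x (m+1)| ≤ Hnorm x := by
  have h := sq_le_hnorm hx m
  have := Real.sqrt_le_sqrt h
  rwa [Real.sqrt_sq_eq_abs, Real.sqrt_sq (hnorm_nonneg x)] at this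

lemma hnorm_congr {x y : ℕ → ℝ} (h : ∀ n, (x (n+1))^2 = (y (n+1))^2) : Hnorm x = Hnorm y := by
  unfold Hnorm; rw [tsum_congr h]

lemma abs_hnorm_sub_le {x y : ℕ → ℝ} (hx : Summable (fun n => x (n+1) ^ 2))
    (hy : Summable (fun n => y (n+1) ^ 2)) :
    |Hnorm x - Hnorm y| ≤ Hnorm (fun n => x n - y n) := by
  have hxy := summable_sq_sub hx hy
  have h1 : Hnorm x ≤ Hnorm (fun n => x n - y n) + Hnorm y := by
    have := hnorm_add_le (x := fun n => x n - y n) (y := y) hxy hy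
    have e : (fun n => (x n - y n) + y n) = x := by funext n; ring
    rwa [e] at this
  have h2 : Hnorm y ≤ Hnorm (fun n => x n - y n) + Hnorm x := by
    have hyx := summable_sq_sub hy hx
    have := hnorm_add_le (x := fun n => y n - x n) (y := x) hyx hx
    have e : (fun n => (y n - x n) + x n) = y := by funext n; ring
    rw [e] at this
    have e2 : Hnorm (fun n => y n - x n) = Hnorm (fun n => x n - y n) :=
      hnorm_congr (fun n => by ring)
    rwa [e2] at this
  rw [abs_sub_le_iff]; constructor <;> linarith

lemma comp_contOn {T : ℝ} {u : ℝ → ℕ → ℝ} (hc : ContPathH T u)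
    (hm : ∀ t ∈ Set.Icc (0:ℝ) T, memH (u t)) (j : ℕ) :
    ContinuousOn (fun s => u s (j+1)) (Set.Icc (0:ℝ) T) := by
  intro t ht
  rw [Metric.continuousWithinAt_iff]
  intro ε hε
  obtain ⟨δ, hδ, hδ'⟩ := hc t ht ε hε
  refine ⟨δ, hδ, fun s hs hd => ?_⟩
  have hsum := summable_sq_sub (hm s hs).2 (hm t ht).2
  have := abs_le_hnorm (x := fun n => u s n - u t n) hsum j
  have h2 := hδ' s hs (by rwa [Real.dist_eq] at hd)
  rw [Real.dist_eq]
  calc |u s (j+1) - u t (j+1)| ≤ Hnorm (fun n => u s n - u t n) := this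
    _ < ε := h2

lemma hnorm_contOn {T : ℝ} {u : ℝ → ℕ → ℝ} (hc : ContPathH T u)
    (hm : ∀ t ∈ Set.Icc (0:ℝ) T, memH (u t)) :
    ContinuousOn (fun s => Hnorm (u s)) (Set.Icc (0:ℝ) T) := by
  intro t ht
  rw [Metric.continuousWithinAt_iff]
  intro ε hε
  obtain ⟨δ, hδ, hδ'⟩ := hc t ht ε hε
  refine ⟨δ, hδ, fun s hs hd => ?_⟩
  have h1 := abs_hnorm_sub_le (hm s hs).2 (hm t ht).2
  have h2 := hδ' s hs (by rwa [Real.dist_eq] at hd)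
  rw [Real.dist_eq]
  exact lt_of_le_of_lt h1 h2

set_option maxHeartbeats 1000000 in
lemma hnorm_sub_contOn {T : ℝ} {u1 u2 : ℝ → ℕ → ℝ}
    (hc1 : ContPathH T u1) (hc2 : ContPathH T u2)
    (hm1 : ∀ t ∈ Set.Icc (0:ℝ) T, memH (u1 t)) (hm2 : ∀ t ∈ Set.Icc (0:ℝ) T, memH (u2 t)) :
    ContinuousOn (fun s => Hnorm (fun n => u1 s n - u2 s n)) (Set.Icc (0:ℝ) T) := by
  intro t ht
  rw [Metric.continuousWithinAt_iff]
  intro ε hε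
  obtain ⟨δ1, hδ1, hδ1'⟩ := hc1 t ht (ε/2) (by linarith)
  obtain ⟨δ2, hδ2, hδ2'⟩ := hc2 t ht (ε/2) (by linarith)
  refine ⟨min δ1 δ2, lt_min hδ1 hδ2, fun s hs hd => ?_⟩
  rw [Real.dist_eq] at hd ⊢
  have hws := summable_sq_sub (hm1 s hs).2 (hm2 s hs).2
  have hwt := summable_sq_sub (hm1 t ht).2 (hm2 t ht).2
  have h1 := abs_hnorm_sub_le (x := fun n => u1 s n - u2 s n)
    (y := fun n => u1 t n - u2 t n) hws hwt
  have hd1 : Hnorm (fun n => u1 s n - u1 t n) < ε/2 :=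
    hδ1' s hs (lt_of_lt_of_le hd (min_le_left _ _))
  have hd2 : Hnorm (fun n => u2 s n - u2 t n) < ε/2 :=
    hδ2' s hs (lt_of_lt_of_le hd (min_le_right _ _))
  have hs1 := summable_sq_sub (hm1 s hs).2 (hm1 t ht).2
  have hs2 := summable_sq_sub (hm2 s hs).2 (hm2 t ht).2
  have htri : Hnorm (fun n => (u1 s n - u2 s n) - (u1 t n - u2 t n)) ≤
      Hnorm (fun n => u1 s n - u1 t n) + Hnorm (fun n => u2 s n - u2 t n) := by
    have := hnorm_add_le (x := fun n => u1 s n - u1 t n)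
      (y := fun n => -(u2 s n - u2 t n)) hs1
      (by simpa [neg_sub] using summable_sq_sub (hm2 t ht).2 (hm2 s hs).2)
    have e : (fun n => (u1 s n - u1 t n) + -(u2 s n - u2 t n))
        = fun n => (u1 s n - u2 s n) - (u1 t n - u2 t n) := by funext n; ring
    rw [e] at this
    have e2 : Hnorm (fun n => -(u2 s n - u2 t n)) = Hnorm (fun n => u2 s n - u2 t n) :=
      hnorm_congr (fun n => by ring)
    rwa [e2] at this
  calc |Hnorm (fun n => u1 s n - u2 s n) - Hnorm (fun n => u1 t n - u2 t n)|
      ≤ Hnorm (fun n => (u1 s n - u2 s n) - (u1 t n - u2 t n)) := h1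
    _ ≤ Hnorm (fun n => u1 s n - u1 t n) + Hnorm (fun n => u2 s n - u2 t n) := htri
    _ < ε/2 + ε/2 := by exact add_lt_add hd1 hd2
    _ = ε := by ring
lemma term_bound {ν : ℝ} (hν : 0 < ν) (K0 K1 a0 a1 a2 b0 b1 b2 : ℝ) :
    2 * (a1 - b1) * (K1 * (a1*a2 - b1*b2) - K0 * (a0^2 - b0^2) - ν * K1^2 * (a1 - b1)) ≤
      -(ν * K1^2 * (a1-b1)^2) + (ν/2) * K0^2 * (a0-b0)^2
        + (2/ν) * ((a1-b1)^2 * a2^2 + (a2-b2)^2 * b1^2)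
        + (4/ν) * (a1-b1)^2 * (a0^2 + b0^2) := by
  have key : ν * (2 * (a1 - b1) * (K1 * (a1*a2 - b1*b2) - K0 * (a0^2 - b0^2)
      - ν * K1^2 * (a1 - b1))) ≤
      -(ν^2 * K1^2 * (a1-b1)^2) + (ν^2/2) * K0^2 * (a0-b0)^2
        + 2 * ((a1-b1)^2 * a2^2 + (a2-b2)^2 * b1^2)
        + 4 * (a1-b1)^2 * (a0^2 + b0^2) := by
    nlinarith [sq_nonneg (ν*K1*(a1-b1) - 2*(a1-b1)*a2),
      sq_nonneg (ν*K1*(a1-b1) - 2*(a2-b2)*b1),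
      sq_nonneg (ν*K0*(a0-b0)/2 + 2*(a1-b1)*a0),
      sq_nonneg (ν*K0*(a0-b0)/2 + 2*(a1-b1)*b0)]
  have h2 : 2 * (a1 - b1) * (K1 * (a1*a2 - b1*b2) - K0 * (a0^2 - b0^2)
      - ν * K1^2 * (a1 - b1)) ≤
      (-(ν^2 * K1^2 * (a1-b1)^2) + (ν^2/2) * K0^2 * (a0-b0)^2
        + 2 * ((a1-b1)^2 * a2^2 + (a2-b2)^2 * b1^2)
        + 4 * (a1-b1)^2 * (a0^2 + b0^2)) / ν := by
    rw [le_div_iff₀ hν]; linarith [key]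
  refine h2.trans (le_of_eq ?_)
  field_simp
lemma shift_sum_le {f : ℕ → ℝ} (hf : ∀ j, 0 ≤ f j) (hf0 : f 0 = 0) (N : ℕ) :
    ∑ j ∈ Finset.range N, f j ≤ ∑ j ∈ Finset.range N, f (j+1) := by
  cases N with
  | zero => simp
  | succ M =>
    rw [Finset.sum_range_succ' f M, hf0, add_zero, Finset.sum_range_succ]
    exact le_add_of_nonneg_right (hf _)

lemma shifted_sum_le_tsum {f : ℕ → ℝ} (hf : ∀ j, 0 ≤ f j) (hsum : Summable f) (N : ℕ) :
    ∑ j ∈ Finset.range N, f (j+1) ≤ ∑' j, f j := by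
  have h1 : ∑ j ∈ Finset.range N, f (j+1) ≤ ∑ j ∈ Finset.range (N+1), f j := by
    rw [Finset.sum_range_succ' f N]
    exact le_add_of_nonneg_right (hf 0)
  exact h1.trans (Summable.sum_le_tsum _ (fun j _ => hf j) hsum)

lemma key_bound {ν : ℝ} (hν : 0 < ν) (K a b : ℕ → ℝ)
    (ha : Summable (fun n => (a (n+1))^2)) (hb : Summable (fun n => (b (n+1))^2))
    (ha0 : a 0 = 0) (hb0 : b 0 = 0) (N : ℕ) :
    ∑ j ∈ Finset.range N, 2 * (a (j+1) - b (j+1)) *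
        (K (j+1) * (a (j+1) * a (j+2) - b (j+1) * b (j+2)) - K j * ((a j)^2 - (b j)^2)
          - ν * (K (j+1))^2 * (a (j+1) - b (j+1)))
      ≤ (6/ν) * ((∑' n, (a (n+1))^2) + (∑' n, (b (n+1))^2))
          * (∑' n, (a (n+1) - b (n+1))^2) := by
  set A := ∑' n, (a (n+1))^2 with hA
  set B := ∑' n, (b (n+1))^2 with hB
  set E := ∑' n, (a (n+1) - b (n+1))^2 with hE
  have hw : Summable (fun n => (a (n+1) - b (n+1))^2) := summable_sq_sub ha hb
  have hA0 : 0 ≤ A := tsum_nonneg (fun n => sq_nonneg _)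
  have hB0 : 0 ≤ B := tsum_nonneg (fun n => sq_nonneg _)
  have hE0 : 0 ≤ E := tsum_nonneg (fun n => sq_nonneg _)
  have haj : ∀ j, (a j)^2 ≤ A := by
    intro j; cases j with
    | zero => rw [ha0]; simpa using hA0
    | succ m => exact Summable.le_tsum ha m (fun n _ => sq_nonneg _)
  have hbj : ∀ j, (b j)^2 ≤ B := by
    intro j; cases j with
    | zero => rw [hb0]; simpa using hB0
    | succ m => exact Summable.le_tsum hb m (fun n _ => sq_nonneg _)
  have hwE : ∀ M, ∑ j ∈ Finset.range M, (a (j+1) - b (j+1))^2 ≤ E :=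
    fun M => Summable.sum_le_tsum _ (fun j _ => sq_nonneg _) hw
  -- per-term bound
  have step1 : ∑ j ∈ Finset.range N, 2 * (a (j+1) - b (j+1)) *
        (K (j+1) * (a (j+1) * a (j+2) - b (j+1) * b (j+2)) - K j * ((a j)^2 - (b j)^2)
          - ν * (K (j+1))^2 * (a (j+1) - b (j+1)))
      ≤ ∑ j ∈ Finset.range N,
        (-(ν * (K (j+1))^2 * (a (j+1) - b (j+1))^2)
          + (ν/2) * (K j)^2 * (a j - b j)^2
          + (2/ν) * ((a (j+1) - b (j+1))^2 * (a (j+2))^2 + (a (j+2) - b (j+2))^2 * (b (j+1))^2)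
          + (4/ν) * (a (j+1) - b (j+1))^2 * ((a j)^2 + (b j)^2)) :=
    Finset.sum_le_sum (fun j _ => term_bound hν (K j) (K (j+1)) (a j) (a (j+1)) (a (j+2))
      (b j) (b (j+1)) (b (j+2)))
  have split : ∑ j ∈ Finset.range N,
        (-(ν * (K (j+1))^2 * (a (j+1) - b (j+1))^2)
          + (ν/2) * (K j)^2 * (a j - b j)^2
          + (2/ν) * ((a (j+1) - b (j+1))^2 * (a (j+2))^2 + (a (j+2) - b (j+2))^2 * (b (j+1))^2)
          + (4/ν) * (a (j+1) - b (j+1))^2 * ((a j)^2 + (b j)^2))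
      = (∑ j ∈ Finset.range N, -(ν * (K (j+1))^2 * (a (j+1) - b (j+1))^2))
        + (∑ j ∈ Finset.range N, (ν/2) * (K j)^2 * (a j - b j)^2)
        + (∑ j ∈ Finset.range N, (2/ν) * ((a (j+1) - b (j+1))^2 * (a (j+2))^2
            + (a (j+2) - b (j+2))^2 * (b (j+1))^2))
        + (∑ j ∈ Finset.range N, (4/ν) * (a (j+1) - b (j+1))^2 * ((a j)^2 + (b j)^2)) := by
    rw [← Finset.sum_add_distrib, ← Finset.sum_add_distrib, ← Finset.sum_add_distrib]
  -- viscous part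
  have visc : (∑ j ∈ Finset.range N, -(ν * (K (j+1))^2 * (a (j+1) - b (j+1))^2))
      + (∑ j ∈ Finset.range N, (ν/2) * (K j)^2 * (a j - b j)^2) ≤ 0 := by
    have h1 : ∑ j ∈ Finset.range N, (ν/2) * (K j)^2 * (a j - b j)^2
        ≤ ∑ j ∈ Finset.range N, (ν/2) * (K (j+1))^2 * (a (j+1) - b (j+1))^2 := by
      apply shift_sum_le (f := fun j => (ν/2) * (K j)^2 * (a j - b j)^2)
      · intro j; positivity
      · rw [ha0, hb0]; ring
    have h2 : ∑ j ∈ Finset.range N, -(ν * (K (j+1))^2 * (a (j+1) - b (j+1))^2)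
        = -(∑ j ∈ Finset.range N, ν * (K (j+1))^2 * (a (j+1) - b (j+1))^2) := by
      rw [Finset.sum_neg_distrib]
    have h3 : ∑ j ∈ Finset.range N, (ν/2) * (K (j+1))^2 * (a (j+1) - b (j+1))^2
        ≤ ∑ j ∈ Finset.range N, ν * (K (j+1))^2 * (a (j+1) - b (j+1))^2 := by
      apply Finset.sum_le_sum
      intro j _
      have : 0 ≤ (K (j+1))^2 * (a (j+1) - b (j+1))^2 := by positivity
      nlinarith
    rw [h2]; linarith
  -- good terms
  have good3 : ∑ j ∈ Finset.range N, (2/ν) * ((a (j+1) - b (j+1))^2 * (a (j+2))^2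
        + (a (j+2) - b (j+2))^2 * (b (j+1))^2) ≤ (2/ν) * (A * E + B * E) := by
    have e : ∀ j ∈ Finset.range N, (2/ν) * ((a (j+1) - b (j+1))^2 * (a (j+2))^2
        + (a (j+2) - b (j+2))^2 * (b (j+1))^2)
        ≤ (2/ν) * ((a (j+1) - b (j+1))^2 * A + (a (j+2) - b (j+2))^2 * B) := by
      intro j _
      have h1 : (a (j+1) - b (j+1))^2 * (a (j+2))^2 ≤ (a (j+1) - b (j+1))^2 * A :=
        mul_le_mul_of_nonneg_left (haj (j+2)) (sq_nonneg _)
      have h2 : (a (j+2) - b (j+2))^2 * (b (j+1))^2 ≤ (a (j+2) - b (j+2))^2 * B :=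
        mul_le_mul_of_nonneg_left (hbj (j+1)) (sq_nonneg _)
      have hc : 0 ≤ 2/ν := by positivity
      apply mul_le_mul_of_nonneg_left _ hc
      linarith
    refine (Finset.sum_le_sum e).trans ?_
    have hsum1 : ∑ j ∈ Finset.range N, (a (j+1) - b (j+1))^2 ≤ E := hwE N
    have hsum2 : ∑ j ∈ Finset.range N, (a (j+2) - b (j+2))^2 ≤ E := by
      have := shifted_sum_le_tsum (f := fun j => (a (j+1) - b (j+1))^2)
        (fun j => sq_nonneg _) hw N
      simpa using this
    have expand : ∑ j ∈ Finset.range N, (2/ν) * ((a (j+1) - b (j+1))^2 * A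
        + (a (j+2) - b (j+2))^2 * B)
        = (2/ν) * ((∑ j ∈ Finset.range N, (a (j+1) - b (j+1))^2) * A
          + (∑ j ∈ Finset.range N, (a (j+2) - b (j+2))^2) * B) := by
      rw [← Finset.mul_sum, Finset.sum_add_distrib, ← Finset.sum_mul, ← Finset.sum_mul]
    rw [expand]
    have hc : 0 ≤ 2/ν := by positivity
    apply mul_le_mul_of_nonneg_left _ hc
    have := mul_le_mul_of_nonneg_right hsum1 hA0
    have := mul_le_mul_of_nonneg_right hsum2 hB0
    linarith
  have good4 : ∑ j ∈ Finset.range N, (4/ν) * (a (j+1) - b (j+1))^2 * ((a j)^2 + (b j)^2)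
      ≤ (4/ν) * (A + B) * E := by
    have e : ∀ j ∈ Finset.range N, (4/ν) * (a (j+1) - b (j+1))^2 * ((a j)^2 + (b j)^2)
        ≤ (4/ν) * (A + B) * (a (j+1) - b (j+1))^2 := by
      intro j _
      have h1 : (a j)^2 + (b j)^2 ≤ A + B := add_le_add (haj j) (hbj j)
      have h2 : 0 ≤ (4/ν) * (a (j+1) - b (j+1))^2 := by positivity
      calc (4/ν) * (a (j+1) - b (j+1))^2 * ((a j)^2 + (b j)^2)
          ≤ (4/ν) * (a (j+1) - b (j+1))^2 * (A + B) := mul_le_mul_of_nonneg_left h1 h2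
        _ = (4/ν) * (A + B) * (a (j+1) - b (j+1))^2 := by ring
    refine (Finset.sum_le_sum e).trans ?_
    rw [← Finset.mul_sum]
    have hc : 0 ≤ (4/ν) * (A + B) := by positivity
    exact mul_le_mul_of_nonneg_left (hwE N) hc
  have final : (2/ν) * (A * E + B * E) + (4/ν) * (A + B) * E = (6/ν) * (A + B) * E := by
    field_simp; ring
  calc ∑ j ∈ Finset.range N, 2 * (a (j+1) - b (j+1)) *
        (K (j+1) * (a (j+1) * a (j+2) - b (j+1) * b (j+2)) - K j * ((a j)^2 - (b j)^2)
          - ν * (K (j+1))^2 * (a (j+1) - b (j+1)))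
      ≤ _ := step1
    _ = _ := split
    _ ≤ 0 + (2/ν) * (A * E + B * E) + (4/ν) * (A + B) * E := by
        have := visc
        have := good3
        have := good4
        linarith
    _ = (6/ν) * (A + B) * E := by rw [zero_add, final]
lemma component_eq {k0 ν T : ℝ} {ω : ℝ → ℕ → ℝ} {u0 : ℕ → ℝ} {u : ℝ → ℕ → ℝ}
    (hu : IsWeakSolution k0 ν T ω u0 u) (j : ℕ) {t : ℝ} (ht : t ∈ Set.Icc (0:ℝ) T) :
    u t (j+1) + ν * ∫ s in (0:ℝ)..t, u s (j+1) * (kseq k0 (j+1))^2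
      = u0 (j+1) + (∫ s in (0:ℝ)..t, (kseq k0 (j+1) * u s (j+1) * u s (j+2)
          - kseq k0 j * (u s j)^2)) + ω t (j+1) := by
  classical
  set φ : ℕ → ℝ := fun n => if n = j+1 then (1:ℝ) else 0 with hφ
  have hφ0 : φ 0 = 0 := by simp [hφ]
  have hφval : ∀ n, n ≠ j → φ (n+1) = 0 := by
    intro n hn; simp only [hφ]; rw [if_neg (by omega)]
  have hφj : φ (j+1) = 1 := by simp [hφ]
  have hφs : Summable (fun n : ℕ => (kseq k0 (n+1))^4 * (φ (n+1))^2) := by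
    apply summable_of_ne_finset_zero (s := {j})
    intro n hn
    rw [hφval n (by simpa using hn)]
    ring
  have heq := hu.2.2 φ hφ0 hφs t ht
  have hHinner : ∀ x : ℕ → ℝ, Hinner x φ = x (j+1) := by
    intro x
    unfold Hinner
    rw [tsum_eq_single j (fun n hn => by rw [hφval n hn, mul_zero])]
    rw [hφj, mul_one]
  have hlin : (∫ s in (0:ℝ)..t, ∑' n : ℕ, u s (n+1) * (kseq k0 (n+1))^2 * φ (n+1))
      = ∫ s in (0:ℝ)..t, u s (j+1) * (kseq k0 (j+1))^2 := by
    apply intervalIntegral.integral_congr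
    intro s _
    simp only
    rw [tsum_eq_single j (fun n hn => by rw [hφval n hn, mul_zero])]
    rw [hφj, mul_one]
  have ht0 : (0:ℝ) ≤ t := ht.1
  have huIcc : Set.uIcc (0:ℝ) t ⊆ Set.Icc (0:ℝ) T := by
    rw [Set.uIcc_of_le ht0]
    exact Set.Icc_subset_Icc le_rfl ht.2
  have hB : (∫ s in (0:ℝ)..t, ∑' n : ℕ, Bop k0 (u s) φ (n+1) * u s (n+1))
      = ∫ s in (0:ℝ)..t, (kseq k0 (j+1) * u s (j+1) * u s (j+2) - kseq k0 j * (u s j)^2) := by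
    apply intervalIntegral.integral_congr
    intro s hs
    have hs' : s ∈ Set.Icc (0:ℝ) T := huIcc hs
    have hu0 : u s 0 = 0 := (hu.1 s hs').1
    simp only
    have hBop : ∀ n : ℕ, Bop k0 (u s) φ (n+1) * u s (n+1)
        = (kseq k0 n * u s n * φ n - kseq k0 (n+1) * u s (n+1) * φ (n+2)) * u s (n+1) := by
      intro n
      unfold Bop
      norm_num
    cases j with
    | zero =>
      rw [tsum_eq_single 1 ?_]
      · rw [hBop 1]
        have h1 : φ 1 = 1 := by simp [hφ]
        have h3 : φ 3 = 0 := by simp [hφ]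
        rw [h1, h3]
        simp [hu0, kseq]
      · intro n hn
        rw [hBop n]
        have e1 : φ n = 0 := by
          simp only [hφ]; rw [if_neg (by omega)]
        have e2 : φ (n+2) = 0 := by
          simp only [hφ]; rw [if_neg (by omega)]
        rw [e1, e2]; ring
    | succ i =>
      have hne : (i : ℕ) ≠ i + 2 := by omega
      rw [tsum_eq_sum (s := {i, i+2}) ?_]
      · rw [Finset.sum_pair hne]
        rw [hBop i, hBop (i+2)]
        have e1 : φ i = 0 := by simp only [hφ]; rw [if_neg (by omega)]
        have e2 : φ (i+2) = 1 := by simp [hφ]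
        have e3 : φ (i+4) = 0 := by simp only [hφ]; rw [if_neg (by omega)]
        rw [e1, e2, e3]
        ring_nf
      · intro n hn
        simp only [Finset.mem_insert, Finset.mem_singleton] at hn
        push_neg at hn
        rw [hBop n]
        have e1 : φ n = 0 := by simp only [hφ]; rw [if_neg (by omega)]
        have e2 : φ (n+2) = 0 := by simp only [hφ]; rw [if_neg (by omega)]
        rw [e1, e2]; ring
  rw [hHinner (u t), hHinner u0, hHinner (ω t), hlin, hB] at heq
  exact heq
/-- Projection of `ℝ` onto `[0,T]`. -/
noncomputable def rho (T : ℝ) (s : ℝ) : ℝ := min (max s 0) T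

lemma rho_continuous (T : ℝ) : Continuous (rho T) :=
  (continuous_id.max continuous_const).min continuous_const

lemma rho_mem {T : ℝ} (hT : 0 ≤ T) (s : ℝ) : rho T s ∈ Set.Icc (0:ℝ) T := by
  constructor
  · exact le_min (le_max_right _ _) hT
  · exact min_le_right _ _

lemma rho_eq {T s : ℝ} (hs : s ∈ Set.Icc (0:ℝ) T) : rho T s = s := by
  rcases hs with ⟨h1, h2⟩
  unfold rho
  rw [max_eq_left h1, min_eq_left h2]

lemma comp_cont_global {T : ℝ} {u : ℝ → ℕ → ℝ} (hT : 0 ≤ T) (hc : ContPathH T u)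
    (hm : ∀ t ∈ Set.Icc (0:ℝ) T, memH (u t)) (j : ℕ) :
    Continuous (fun s => u (rho T s) j) := by
  cases j with
  | zero =>
    have e : (fun s => u (rho T s) 0) = fun _ => (0:ℝ) := by
      funext s
      exact (hm (rho T s) (rho_mem hT s)).1
    rw [e]
    exact continuous_const
  | succ m =>
    exact (comp_contOn hc hm m).comp_continuous (rho_continuous T) (rho_mem hT)

/-- The integrand driving the difference of two solutions, globally extended. -/
noncomputable def Fd (k0 ν T : ℝ) (u1 u2 : ℝ → ℕ → ℝ) (j : ℕ) (s : ℝ) : ℝ :=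
  kseq k0 (j+1) * (u1 (rho T s) (j+1) * u1 (rho T s) (j+2)
      - u2 (rho T s) (j+1) * u2 (rho T s) (j+2))
    - kseq k0 j * ((u1 (rho T s) j)^2 - (u2 (rho T s) j)^2)
    - ν * (kseq k0 (j+1))^2 * (u1 (rho T s) (j+1) - u2 (rho T s) (j+1))

lemma Fd_continuous {k0 ν T : ℝ} {ω : ℝ → ℕ → ℝ} {u1 u2 : ℝ → ℕ → ℝ} (hT : 0 ≤ T)
    (h1 : IsWeakSolution k0 ν T ω (u1 0) u1) (h2 : IsWeakSolution k0 ν T ω (u2 0) u2)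
    (j : ℕ) : Continuous (Fd k0 ν T u1 u2 j) := by
  have c1 := comp_cont_global hT h1.2.1 h1.1
  have c2 := comp_cont_global hT h2.2.1 h2.1
  unfold Fd
  exact ((continuous_const.mul (((c1 (j+1)).mul (c1 (j+2))).sub
      ((c2 (j+1)).mul (c2 (j+2))))).sub
    (continuous_const.mul (((c1 j).pow 2).sub ((c2 j).pow 2)))).sub
    (continuous_const.mul ((c1 (j+1)).sub (c2 (j+1))))

lemma diff_integral {k0 ν T : ℝ} {ω : ℝ → ℕ → ℝ} {u1 u2 : ℝ → ℕ → ℝ} (hT : 0 < T)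
    (h1 : IsWeakSolution k0 ν T ω (u1 0) u1) (h2 : IsWeakSolution k0 ν T ω (u2 0) u2)
    (j : ℕ) {t : ℝ} (ht : t ∈ Set.Icc (0:ℝ) T) :
    u1 t (j+1) - u2 t (j+1)
      = (u1 0 (j+1) - u2 0 (j+1)) + ∫ s in (0:ℝ)..t, Fd k0 ν T u1 u2 j s := by
  have ht0 : (0:ℝ) ≤ t := ht.1
  have huIcc : Set.uIcc (0:ℝ) t ⊆ Set.Icc (0:ℝ) T := by
    rw [Set.uIcc_of_le ht0]
    exact Set.Icc_subset_Icc le_rfl ht.2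
  have c11 := comp_cont_global hT.le h1.2.1 h1.1
  have c22 := comp_cont_global hT.le h2.2.1 h2.1
  have heq1 := component_eq h1 j ht
  have heq2 := component_eq h2 j ht
  -- rewrite the integrals via rho
  have hI1 : (∫ s in (0:ℝ)..t, u1 s (j+1) * (kseq k0 (j+1))^2)
      = ∫ s in (0:ℝ)..t, u1 (rho T s) (j+1) * (kseq k0 (j+1))^2 :=
    intervalIntegral.integral_congr (fun s hs => by rw [rho_eq (huIcc hs)])
  have hI2 : (∫ s in (0:ℝ)..t, u2 s (j+1) * (kseq k0 (j+1))^2)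
      = ∫ s in (0:ℝ)..t, u2 (rho T s) (j+1) * (kseq k0 (j+1))^2 :=
    intervalIntegral.integral_congr (fun s hs => by rw [rho_eq (huIcc hs)])
  have hJ1 : (∫ s in (0:ℝ)..t, (kseq k0 (j+1) * u1 s (j+1) * u1 s (j+2)
        - kseq k0 j * (u1 s j)^2))
      = ∫ s in (0:ℝ)..t, (kseq k0 (j+1) * u1 (rho T s) (j+1) * u1 (rho T s) (j+2)
        - kseq k0 j * (u1 (rho T s) j)^2) :=
    intervalIntegral.integral_congr (fun s hs => by rw [rho_eq (huIcc hs)])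
  have hJ2 : (∫ s in (0:ℝ)..t, (kseq k0 (j+1) * u2 s (j+1) * u2 s (j+2)
        - kseq k0 j * (u2 s j)^2))
      = ∫ s in (0:ℝ)..t, (kseq k0 (j+1) * u2 (rho T s) (j+1) * u2 (rho T s) (j+2)
        - kseq k0 j * (u2 (rho T s) j)^2) :=
    intervalIntegral.integral_congr (fun s hs => by rw [rho_eq (huIcc hs)])
  rw [hI1, hJ1] at heq1
  rw [hI2, hJ2] at heq2
  -- integrability
  have int1 : IntervalIntegrable (fun s => kseq k0 (j+1) * u1 (rho T s) (j+1) * u1 (rho T s) (j+2)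
      - kseq k0 j * (u1 (rho T s) j)^2) MeasureTheory.volume 0 t := by
    apply Continuous.intervalIntegrable
    exact (((continuous_const.mul (c11 (j+1))).mul (c11 (j+2))).sub
      (continuous_const.mul ((c11 j).pow 2)))
  have int2 : IntervalIntegrable (fun s => kseq k0 (j+1) * u2 (rho T s) (j+1) * u2 (rho T s) (j+2)
      - kseq k0 j * (u2 (rho T s) j)^2) MeasureTheory.volume 0 t := by
    apply Continuous.intervalIntegrable
    exact (((continuous_const.mul (c22 (j+1))).mul (c22 (j+2))).sub
      (continuous_const.mul ((c22 j).pow 2)))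
  have int3 : IntervalIntegrable (fun s => u1 (rho T s) (j+1) * (kseq k0 (j+1))^2)
      MeasureTheory.volume 0 t :=
    ((c11 (j+1)).mul continuous_const).intervalIntegrable _ _
  have int4 : IntervalIntegrable (fun s => u2 (rho T s) (j+1) * (kseq k0 (j+1))^2)
      MeasureTheory.volume 0 t :=
    ((c22 (j+1)).mul continuous_const).intervalIntegrable _ _
  have hF : (∫ s in (0:ℝ)..t, Fd k0 ν T u1 u2 j s)
      = ((∫ s in (0:ℝ)..t, (kseq k0 (j+1) * u1 (rho T s) (j+1) * u1 (rho T s) (j+2)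
          - kseq k0 j * (u1 (rho T s) j)^2))
        - ∫ s in (0:ℝ)..t, (kseq k0 (j+1) * u2 (rho T s) (j+1) * u2 (rho T s) (j+2)
          - kseq k0 j * (u2 (rho T s) j)^2))
        - ν * ((∫ s in (0:ℝ)..t, u1 (rho T s) (j+1) * (kseq k0 (j+1))^2)
          - ∫ s in (0:ℝ)..t, u2 (rho T s) (j+1) * (kseq k0 (j+1))^2) := by
    rw [← intervalIntegral.integral_sub int1 int2, ← intervalIntegral.integral_sub int3 int4,
      ← intervalIntegral.integral_const_mul, ← intervalIntegral.integral_sub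
        ((int1.sub int2)) (((int3.sub int4).const_mul ν))]
    apply intervalIntegral.integral_congr
    intro s _
    unfold Fd
    ring
  rw [hF]
  linarith [heq1, heq2]
lemma my_gronwall {E0 T : ℝ} {E g : ℝ → ℝ} (hE0 : 0 ≤ E0)
    (hEcont : Continuous E) (hgcont : Continuous g) (hgnn : ∀ s, 0 ≤ g s)
    (hineq : ∀ t ∈ Set.Icc (0:ℝ) T, E t ≤ E0 + ∫ s in (0:ℝ)..t, g s * E s) :
    ∀ t ∈ Set.Icc (0:ℝ) T, E t ≤ E0 * Real.exp (∫ s in (0:ℝ)..t, g s) := by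
  set G : ℝ → ℝ := fun t => E0 + ∫ s in (0:ℝ)..t, g s * E s with hGdef
  set Φ : ℝ → ℝ := fun t => ∫ s in (0:ℝ)..t, g s with hΦdef
  set Ψ : ℝ → ℝ := fun t => G t * Real.exp (-Φ t) with hΨdef
  have hG : ∀ t, HasDerivAt G (g t * E t) t := by
    intro t
    exact (((hgcont.mul hEcont).integral_hasStrictDerivAt 0 t).hasDerivAt).const_add E0
  have hΦ : ∀ t, HasDerivAt Φ (g t) t := by
    intro t
    exact ((hgcont.integral_hasStrictDerivAt 0 t).hasDerivAt)
  have hΨ : ∀ t, HasDerivAt Ψ ((g t * E t) * Real.exp (-Φ t)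
      + G t * (Real.exp (-Φ t) * (-(g t)))) t := by
    intro t
    exact (hG t).mul ((hΦ t).neg.exp)
  have hΨanti : AntitoneOn Ψ (Set.Icc (0:ℝ) T) := by
    apply antitoneOn_of_deriv_nonpos (convex_Icc 0 T)
    · exact Continuous.continuousOn
        (continuous_iff_continuousAt.2 (fun x => ((hΨ x).differentiableAt).continuousAt))
    · intro x hx
      exact ((hΨ x).differentiableAt).differentiableWithinAt
    · intro x hx
      rw [(hΨ x).deriv]
      rw [interior_Icc] at hx
      have hxI : x ∈ Set.Icc (0:ℝ) T := ⟨hx.1.le, hx.2.le⟩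
      have hEG : E x ≤ G x := hineq x hxI
      have hexp : 0 < Real.exp (-Φ x) := Real.exp_pos _
      have : (g x * E x) * Real.exp (-Φ x) + G x * (Real.exp (-Φ x) * (-(g x)))
          = g x * Real.exp (-Φ x) * (E x - G x) := by ring
      rw [this]
      apply mul_nonpos_of_nonneg_of_nonpos
      · exact mul_nonneg (hgnn x) hexp.le
      · linarith
  intro t ht
  have hΨt : Ψ t ≤ Ψ 0 := hΨanti (Set.left_mem_Icc.2 (ht.1.trans ht.2)) ht ht.1
  have hΨ0 : Ψ 0 = E0 := by
    simp [hΨdef, hGdef, hΦdef, intervalIntegral.integral_same]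
  have hGt : G t ≤ E0 * Real.exp (Φ t) := by
    rw [hΨ0] at hΨt
    have h2 : G t * Real.exp (-Φ t) ≤ E0 := hΨt
    have h3 := mul_le_mul_of_nonneg_right h2 (Real.exp_pos (Φ t)).le
    rwa [mul_assoc, ← Real.exp_add, neg_add_cancel, Real.exp_zero, mul_one] at h3
  exact (hineq t ht).trans hGt
set_option maxHeartbeats 1000000 in
lemma energy_ineq {k0 ν T : ℝ} {ω : ℝ → ℕ → ℝ} {u1 u2 : ℝ → ℕ → ℝ}
    (hν : 0 < ν) (hT : 0 < T)
    (h1 : IsWeakSolution k0 ν T ω (u1 0) u1) (h2 : IsWeakSolution k0 ν T ω (u2 0) u2) :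
    ∀ t ∈ Set.Icc (0:ℝ) T,
      (∑' n, (u1 t (n+1) - u2 t (n+1))^2)
        ≤ (∑' n, (u1 0 (n+1) - u2 0 (n+1))^2)
          + ∫ s in (0:ℝ)..t,
              ((6/ν) * ((Hnorm (u1 (rho T s)))^2 + (Hnorm (u2 (rho T s)))^2))
                * (∑' n, (u1 (rho T s) (n+1) - u2 (rho T s) (n+1))^2) := by
  intro t ht
  have ht0 : (0:ℝ) ≤ t := ht.1
  have h0T : (0:ℝ) ∈ Set.Icc (0:ℝ) T := Set.left_mem_Icc.2 hT.le
  -- the fundamental ODE objects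
  set W : ℕ → ℝ → ℝ := fun j r => (u1 0 (j+1) - u2 0 (j+1)) + ∫ s in (0:ℝ)..r,
    Fd k0 ν T u1 u2 j s with hWdef
  have hFc : ∀ j, Continuous (Fd k0 ν T u1 u2 j) := fun j => Fd_continuous hT.le h1 h2 j
  have hW : ∀ j, ∀ r ∈ Set.Icc (0:ℝ) T, W j r = u1 r (j+1) - u2 r (j+1) := by
    intro j r hr
    rw [hWdef]
    exact (diff_integral hT h1 h2 j hr).symm
  have hWd : ∀ j r, HasDerivAt (W j) (Fd k0 ν T u1 u2 j r) r := by
    intro j r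
    exact (((hFc j).integral_hasStrictDerivAt 0 r).hasDerivAt).const_add _
  -- derivative of the truncated energy
  have hENd : ∀ N r, HasDerivAt (fun x => ∑ j ∈ Finset.range N, (W j x)^2)
      (∑ j ∈ Finset.range N, 2 * W j r * Fd k0 ν T u1 u2 j r) r := by
    intro N r
    have := HasDerivAt.fun_sum (fun j (_ : j ∈ Finset.range N) => (hWd j r).pow 2)
    refine this.congr_deriv ?_
    apply Finset.sum_congr rfl
    intro j _
    push_cast
    ring
  have hDcont : ∀ N, Continuous (fun r => ∑ j ∈ Finset.range N,
      2 * W j r * Fd k0 ν T u1 u2 j r) := by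
    intro N
    apply continuous_finset_sum
    intro j _
    have hWc : Continuous (W j) :=
      continuous_iff_continuousAt.2 (fun r => (hWd j r).differentiableAt.continuousAt)
    exact (continuous_const.mul hWc).mul (hFc j)
  -- FTC
  have hFTC : ∀ N, (∑ j ∈ Finset.range N, (W j t)^2) - (∑ j ∈ Finset.range N, (W j 0)^2)
      = ∫ s in (0:ℝ)..t, (∑ j ∈ Finset.range N, 2 * W j s * Fd k0 ν T u1 u2 j s) := by
    intro N
    exact (intervalIntegral.integral_eq_sub_of_hasDerivAt
      (fun x _ => hENd N x) ((hDcont N).intervalIntegrable 0 t)).symm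
  -- the majorant
  set h : ℝ → ℝ := fun s => ((6/ν) * ((Hnorm (u1 (rho T s)))^2 + (Hnorm (u2 (rho T s)))^2))
    * (∑' n, (u1 (rho T s) (n+1) - u2 (rho T s) (n+1))^2) with hhdef
  have hcont : Continuous h := by
    have cA : Continuous (fun s => Hnorm (u1 (rho T s))) :=
      (hnorm_contOn h1.2.1 h1.1).comp_continuous (rho_continuous T) (rho_mem hT.le)
    have cB : Continuous (fun s => Hnorm (u2 (rho T s))) :=
      (hnorm_contOn h2.2.1 h2.1).comp_continuous (rho_continuous T) (rho_mem hT.le)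
    have cE0 : Continuous (fun s => Hnorm (fun n => u1 (rho T s) n - u2 (rho T s) n)) :=
      (hnorm_sub_contOn h1.2.1 h2.2.1 h1.1 h2.1).comp_continuous (rho_continuous T)
        (rho_mem hT.le)
    have cE : Continuous (fun s => ∑' n, (u1 (rho T s) (n+1) - u2 (rho T s) (n+1))^2) := by
      have e : (fun s => ∑' n, (u1 (rho T s) (n+1) - u2 (rho T s) (n+1))^2)
          = fun s => (Hnorm (fun n => u1 (rho T s) n - u2 (rho T s) n))^2 := by
        funext s
        exact (hnorm_sq (x := fun n => u1 (rho T s) n - u2 (rho T s) n)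
          (summable_sq_sub (h1.1 _ (rho_mem hT.le s)).2 (h2.1 _ (rho_mem hT.le s)).2)).symm
      rw [e]
      exact cE0.pow 2
    exact (continuous_const.mul ((cA.pow 2).add (cB.pow 2))).mul cE
  -- pointwise bound on the derivative
  have hptw : ∀ N, ∀ s ∈ Set.Icc (0:ℝ) t,
      (∑ j ∈ Finset.range N, 2 * W j s * Fd k0 ν T u1 u2 j s) ≤ h s := by
    intro N s hs
    have hsT : s ∈ Set.Icc (0:ℝ) T := ⟨hs.1, hs.2.trans ht.2⟩
    have hρ : rho T s = s := rho_eq hsT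
    have hsum1 := (h1.1 s hsT).2
    have hsum2 := (h2.1 s hsT).2
    have hkey := key_bound hν (kseq k0) (u1 s) (u2 s) hsum1 hsum2
      (h1.1 s hsT).1 (h2.1 s hsT).1 N
    have heqD : (∑ j ∈ Finset.range N, 2 * W j s * Fd k0 ν T u1 u2 j s)
        = ∑ j ∈ Finset.range N, 2 * (u1 s (j+1) - u2 s (j+1)) *
            (kseq k0 (j+1) * (u1 s (j+1) * u1 s (j+2) - u2 s (j+1) * u2 s (j+2))
              - kseq k0 j * ((u1 s j)^2 - (u2 s j)^2)
              - ν * (kseq k0 (j+1))^2 * (u1 s (j+1) - u2 s (j+1))) := by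
      apply Finset.sum_congr rfl
      intro j _
      rw [hW j s hsT]
      unfold Fd
      rw [hρ]
    have hhs : h s = (6/ν) * ((∑' n, (u1 s (n+1))^2) + (∑' n, (u2 s (n+1))^2))
        * (∑' n, (u1 s (n+1) - u2 s (n+1))^2) := by
      rw [hhdef]
      simp only
      rw [hρ, hnorm_sq hsum1, hnorm_sq hsum2]
    rw [heqD, hhs]
    exact hkey
  -- integrate the bound
  have hint : ∀ N, (∑ j ∈ Finset.range N, (W j t)^2) ≤ (∑ j ∈ Finset.range N, (W j 0)^2)
      + ∫ s in (0:ℝ)..t, h s := by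
    intro N
    have hDint : IntervalIntegrable (fun r => ∑ j ∈ Finset.range N,
        2 * W j r * Fd k0 ν T u1 u2 j r) MeasureTheory.volume 0 t :=
      (hDcont N).intervalIntegrable 0 t
    have hhint : IntervalIntegrable h MeasureTheory.volume 0 t :=
      hcont.intervalIntegrable 0 t
    have hmono := intervalIntegral.integral_mono_on ht0 hDint hhint (hptw N)
    have := hFTC N
    linarith
  -- pass to the limit
  have hw0 : Summable (fun n => (u1 0 (n+1) - u2 0 (n+1))^2) :=
    summable_sq_sub (h1.1 0 h0T).2 (h2.1 0 h0T).2
  have hwt : Summable (fun n => (u1 t (n+1) - u2 t (n+1))^2) :=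
    summable_sq_sub (h1.1 t ht).2 (h2.1 t ht).2
  have hlim : ∀ N, (∑ j ∈ Finset.range N, (W j t)^2)
      = ∑ j ∈ Finset.range N, (u1 t (j+1) - u2 t (j+1))^2 := by
    intro N
    exact Finset.sum_congr rfl (fun j _ => by rw [hW j t ht])
  have hbound : ∀ N, (∑ j ∈ Finset.range N, (u1 t (j+1) - u2 t (j+1))^2)
      ≤ (∑' n, (u1 0 (n+1) - u2 0 (n+1))^2) + ∫ s in (0:ℝ)..t, h s := by
    intro N
    have hi := hint N
    rw [hlim N] at hi
    have h0N : (∑ j ∈ Finset.range N, (W j 0)^2)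
        ≤ ∑' n, (u1 0 (n+1) - u2 0 (n+1))^2 := by
      have e : (∑ j ∈ Finset.range N, (W j 0)^2)
          = ∑ j ∈ Finset.range N, (u1 0 (j+1) - u2 0 (j+1))^2 :=
        Finset.sum_congr rfl (fun j _ => by rw [hW j 0 h0T])
      rw [e]
      exact Summable.sum_le_tsum _ (fun j _ => sq_nonneg _) hw0
    linarith
  have htend := hwt.hasSum.tendsto_sum_nat
  exact le_of_tendsto' htend hbound

/-- Pathwise uniqueness and stability: if `u₁, u₂ ∈ C([0,T];H)` are weak solutions
of the dyadic model with the same forcing path `ω : [0,T] → H`, then for a constant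
`C > 0` depending only on `ν`,
`|u₁(t) − u₂(t)|_H² ≤ exp(C ∫₀ᵗ (|u₁(s)|_H² + |u₂(s)|_H²) ds) · |u₁(0) − u₂(0)|_H²`
for all `t ∈ [0,T]`; in particular equal initial data force `u₁ = u₂` on `[0,T]`. -/
theorem stmt5 (ν : ℝ) (hν : 0 < ν) :
    ∃ C : ℝ, 0 < C ∧ ∀ (k0 T : ℝ), 0 < k0 → 0 < T →
      ∀ ω : ℝ → ℕ → ℝ, (∀ t ∈ Set.Icc (0 : ℝ) T, memH (ω t)) →
      ∀ u1 u2 : ℝ → ℕ → ℝ,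
        IsWeakSolution k0 ν T ω (u1 0) u1 → IsWeakSolution k0 ν T ω (u2 0) u2 →
        (∀ t ∈ Set.Icc (0 : ℝ) T,
          (Hnorm (fun n => u1 t n - u2 t n)) ^ 2 ≤
            Real.exp (C * ∫ s in (0 : ℝ)..t, ((Hnorm (u1 s)) ^ 2 + (Hnorm (u2 s)) ^ 2)) *
              (Hnorm (fun n => u1 0 n - u2 0 n)) ^ 2) ∧
        ((∀ n, u1 0 n = u2 0 n) → ∀ t ∈ Set.Icc (0 : ℝ) T, ∀ n, u1 t n = u2 t n) := by
  refine ⟨6/ν, by positivity, ?_⟩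
  intro k0 T hk0 hT ω hω u1 u2 h1 h2
  have h0T : (0:ℝ) ∈ Set.Icc (0:ℝ) T := Set.left_mem_Icc.2 hT.le
  set E : ℝ → ℝ := fun s => (Hnorm (fun n => u1 (rho T s) n - u2 (rho T s) n))^2 with hEdef
  set g : ℝ → ℝ := fun s => (6/ν) * ((Hnorm (u1 (rho T s)))^2 + (Hnorm (u2 (rho T s)))^2)
    with hgdef
  have hEval : ∀ r, E r = ∑' n, (u1 (rho T r) (n+1) - u2 (rho T r) (n+1))^2 := by
    intro r
    rw [hEdef]
    exact hnorm_sq (x := fun n => u1 (rho T r) n - u2 (rho T r) n)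
      (summable_sq_sub (h1.1 _ (rho_mem hT.le r)).2 (h2.1 _ (rho_mem hT.le r)).2)
  have hEIcc : ∀ t ∈ Set.Icc (0:ℝ) T, E t = ∑' n, (u1 t (n+1) - u2 t (n+1))^2 := by
    intro t ht
    rw [hEval t, rho_eq ht]
  set E0 : ℝ := (Hnorm (fun n => u1 0 n - u2 0 n))^2 with hE0def
  have hE00 : E0 = ∑' n, (u1 0 (n+1) - u2 0 (n+1))^2 :=
    hnorm_sq (x := fun n => u1 0 n - u2 0 n)
      (summable_sq_sub (h1.1 0 h0T).2 (h2.1 0 h0T).2)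
  have hE0E : E 0 = E0 := by rw [hEIcc 0 h0T, hE00]
  -- continuity
  have cE0 : Continuous (fun s => Hnorm (fun n => u1 (rho T s) n - u2 (rho T s) n)) :=
    (hnorm_sub_contOn h1.2.1 h2.2.1 h1.1 h2.1).comp_continuous (rho_continuous T)
      (rho_mem hT.le)
  have hEcont : Continuous E := cE0.pow 2
  have cA : Continuous (fun s => Hnorm (u1 (rho T s))) :=
    (hnorm_contOn h1.2.1 h1.1).comp_continuous (rho_continuous T) (rho_mem hT.le)
  have cB : Continuous (fun s => Hnorm (u2 (rho T s))) :=
    (hnorm_contOn h2.2.1 h2.1).comp_continuous (rho_continuous T) (rho_mem hT.le)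
  have hgcont : Continuous g := continuous_const.mul ((cA.pow 2).add (cB.pow 2))
  have hgnn : ∀ s, 0 ≤ g s := by
    intro s
    rw [hgdef]
    have : 0 ≤ 6/ν := by positivity
    positivity
  -- integral inequality
  have hineq : ∀ t ∈ Set.Icc (0:ℝ) T, E t ≤ E0 + ∫ s in (0:ℝ)..t, g s * E s := by
    intro t ht
    have hmain := energy_ineq hν hT h1 h2 t ht
    rw [hEIcc t ht, hE00]
    have e : (fun s => ((6/ν) * ((Hnorm (u1 (rho T s)))^2 + (Hnorm (u2 (rho T s)))^2))
        * (∑' n, (u1 (rho T s) (n+1) - u2 (rho T s) (n+1))^2)) = fun s => g s * E s := by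
      funext s
      rw [hEval s, hgdef]
    rw [← e]
    exact hmain
  have hE0nn : 0 ≤ E0 := by rw [hE00]; exact tsum_nonneg (fun n => sq_nonneg _)
  have hgron := my_gronwall hE0nn hEcont hgcont hgnn hineq
  -- rewrite the exponent
  have hexp : ∀ t ∈ Set.Icc (0:ℝ) T,
      (∫ s in (0:ℝ)..t, g s)
        = (6/ν) * ∫ s in (0:ℝ)..t, ((Hnorm (u1 s))^2 + (Hnorm (u2 s))^2) := by
    intro t ht
    have huIcc : Set.uIcc (0:ℝ) t ⊆ Set.Icc (0:ℝ) T := by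
      rw [Set.uIcc_of_le ht.1]
      exact Set.Icc_subset_Icc le_rfl ht.2
    have e : (∫ s in (0:ℝ)..t, g s)
        = ∫ s in (0:ℝ)..t, (6/ν) * ((Hnorm (u1 s))^2 + (Hnorm (u2 s))^2) := by
      apply intervalIntegral.integral_congr
      intro s hs
      rw [hgdef]
      simp only
      rw [rho_eq (huIcc hs)]
    rw [e, intervalIntegral.integral_const_mul]
  constructor
  · intro t ht
    have hg := hgron t ht
    rw [hexp t ht] at hg
    have hEt : (Hnorm (fun n => u1 t n - u2 t n))^2 = E t := by
      rw [hEdef]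
      simp only
      rw [rho_eq ht]
    rw [hEt]
    calc E t ≤ E0 * Real.exp ((6/ν) * ∫ s in (0:ℝ)..t,
          ((Hnorm (u1 s))^2 + (Hnorm (u2 s))^2)) := hg
      _ = Real.exp ((6/ν) * ∫ s in (0:ℝ)..t, ((Hnorm (u1 s))^2 + (Hnorm (u2 s))^2)) * E0 :=
        mul_comm _ _
  · intro h0 t ht n
    have hE0z : E0 = 0 := by
      rw [hE00]
      have : ∀ m : ℕ, (u1 0 (m+1) - u2 0 (m+1))^2 = 0 := by
        intro m
        rw [h0 (m+1)]
        ring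
      rw [tsum_congr this]
      exact tsum_zero
    have hg := hgron t ht
    rw [hE0z, zero_mul] at hg
    have hEt := hEIcc t ht
    have hwt : Summable (fun m => (u1 t (m+1) - u2 t (m+1))^2) :=
      summable_sq_sub (h1.1 t ht).2 (h2.1 t ht).2
    have hnn : (0:ℝ) ≤ ∑' m, (u1 t (m+1) - u2 t (m+1))^2 := tsum_nonneg (fun m => sq_nonneg _)
    have hzero : ∑' m, (u1 t (m+1) - u2 t (m+1))^2 = 0 := le_antisymm (by rw [← hEt]; exact hg) hnn
    cases n with
    | zero =>
      rw [(h1.1 t ht).1, (h2.1 t ht).1]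
    | succ m =>
      have hle := Summable.le_tsum hwt m (fun k _ => sq_nonneg _)
      rw [hzero] at hle
      have : (u1 t (m+1) - u2 t (m+1))^2 = 0 := le_antisymm hle (sq_nonneg _)
      have := pow_eq_zero_iff (n := 2) (by norm_num) |>.1 this
      linarith [sub_eq_zero.1 this]
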